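/- (Edge-length barrier, Theorem 3.) Assume the framework setup and suppose D < (1/9)(8/3 + √μ̄·√(μ̄ + 8/3) − μ̄). Define η₃ = (L/2)(√(μ̄ + 8/3) − √μ̄) and, for η > 0, e_min(η) = √((|ω|/κ)² + (2/3)(λ/κ)η²(1 − (3/2)η₁/η)) − |ω|/κ. Then: (i) η₃ > (3/2)η₁; (ii) every q ∈ 𝒞^p with (3/2)η₁ < |q − p| ≤ η₃ satisfies |e(q) − e(p)| ≥ e_min(|q − p|); (iii) for every continuous path q : [0,1] → 𝒞^p with q(0) = p whose endpoint q(1) has the same edge lengths as p (|q(1)_i − q(1)_j| = |p_i − p_j| for every edge) and satisfies |q(1) − p| > (3/2)η₁, there exists t ∈ [0,1] with |e(q(t)) − e(p)| ≥ e_min(η₃). -/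

import Mathlib

noncomputable section
open scoped BigOperators InnerProductSpace Classical

/-- Configuration space of `n` points in `ℝ^d`, with the Euclidean norm on `ℝ^{dn}`. -/
abbrev Config (n d : ℕ) := PiLp 2 (fun _ : Fin n => EuclideanSpace ℝ (Fin d))

/-- The rigidity operator `R(q)` applied to `u`: the `k`-th entry, for edge `k = (i,j)`,
is `⟨q_i - q_j, u_i - u_j⟩`. -/
def rig {n d m : ℕ} (E : Fin m → Fin n × Fin n) (q u : Config n d) :
    EuclideanSpace ℝ (Fin m) :=
  WithLp.toLp 2 (fun k => ⟪q (E k).1 - q (E k).2, u (E k).1 - u (E k).2⟫_ℝ)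

/-- The stress form `Ω_ω(v) = Σ_{(i,j)∈E} ω_{ij} |v_i - v_j|²`. -/
def stressForm {n d m : ℕ} (E : Fin m → Fin n × Fin n)
    (ω : EuclideanSpace ℝ (Fin m)) (v : Config n d) : ℝ :=
  ∑ k, ω k * ‖v (E k).1 - v (E k).2‖ ^ 2

/-- The vector `ωᵀ R(p) ∈ ℝ^{dn}` whose `l`-th block is `Σ_{j : (l,j)∈E} ω_{lj} (p_l - p_j)`. -/
def stressGrad {n d m : ℕ} (E : Fin m → Fin n × Fin n)
    (ω : EuclideanSpace ℝ (Fin m)) (p : Config n d) : Config n d :=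
  WithLp.toLp 2 (fun l => ∑ k, (((if (E k).1 = l then (1:ℝ) else 0) - (if (E k).2 = l then (1:ℝ) else 0)) * ω k) •
    (p (E k).1 - p (E k).2))

/-- The vector `e(q) ∈ ℝ^m` of squared edge lengths. -/
def esq {n d m : ℕ} (E : Fin m → Fin n × Fin n) (q : Config n d) :
    EuclideanSpace ℝ (Fin m) :=
  WithLp.toLp 2 (fun k => ‖q (E k).1 - q (E k).2‖ ^ 2)

/-- `z` bounds the number of edges incident to each vertex (`z ≥` the maximum adjacency). -/
def degBound {n m : ℕ} (E : Fin m → Fin n × Fin n) (z : ℝ) : Prop :=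
  ∀ l : Fin n, ((Finset.univ.filter (fun k => (E k).1 = l ∨ (E k).2 = l)).card : ℝ) ≤ z

section Aux

variable {n d m : ℕ}

lemma esq_diff (E : Fin m → Fin n × Fin n) (p v : Config n d) (k : Fin m) :
    (esq E (p + v) - esq E p) k =
      2 * rig E p v k + ‖v (E k).1 - v (E k).2‖^2 := by
  have h : (p + v) (E k).1 - (p + v) (E k).2
      = (p (E k).1 - p (E k).2) + (v (E k).1 - v (E k).2) := by
    simp only [PiLp.add_apply]; abel
  simp only [esq, rig, PiLp.sub_apply, h, norm_add_sq_real]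
  ring

lemma inner_stressGrad (E : Fin m → Fin n × Fin n) (ω : EuclideanSpace ℝ (Fin m))
    (p v : Config n d) :
    ⟪stressGrad E ω p, v⟫_ℝ = ∑ k, ω k * rig E p v k := by
  rw [PiLp.inner_apply]
  simp only [stressGrad, rig, sum_inner, real_inner_smul_left]
  rw [Finset.sum_comm]
  congr 1
  ext k
  simp only [sub_mul, one_mul, zero_mul, ite_mul, Finset.sum_sub_distrib]
  rw [Finset.sum_ite_eq, Finset.sum_ite_eq]
  simp [inner_sub_right, mul_sub]

lemma inner_omega_esq (E : Fin m → Fin n × Fin n) (ω : EuclideanSpace ℝ (Fin m))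
    (p v : Config n d) :
    ⟪ω, esq E (p + v) - esq E p⟫_ℝ
      = stressForm E ω v + 2 * ⟪stressGrad E ω p, v⟫_ℝ := by
  rw [inner_stressGrad, PiLp.inner_apply, stressForm]
  simp only [RCLike.inner_apply, conj_trivial, esq_diff]
  rw [Finset.mul_sum, ← Finset.sum_add_distrib]
  congr 1; ext k; ring

lemma pair_le (v : Config n d) {i j : Fin n} (hij : i ≠ j) :
    ‖v i‖^2 + ‖v j‖^2 ≤ ‖v‖^2 := by
  conv_rhs => rw [PiLp.norm_sq_eq_of_L2]
  have : ∑ l ∈ ({i, j} : Finset (Fin n)), ‖v l‖^2 ≤ ∑ l, ‖v l‖^2 :=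
    Finset.sum_le_sum_of_subset_of_nonneg (Finset.subset_univ _)
      (fun l _ _ => sq_nonneg _)
  rwa [Finset.sum_insert (by simp [hij]), Finset.sum_singleton] at this

lemma sum_pairs_le (E : Fin m → Fin n × Fin n) (hE : ∀ k, (E k).1 ≠ (E k).2)
    {z : ℝ} (hdeg : degBound E z) (v : Config n d) :
    ∑ k, (‖v (E k).1‖^2 + ‖v (E k).2‖^2) ≤ z * ‖v‖^2 := by
  have h1 : ∀ k : Fin m, ‖v (E k).1‖^2 + ‖v (E k).2‖^2
      = ∑ l, (if (E k).1 = l ∨ (E k).2 = l then ‖v l‖^2 else 0) := by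
    intro k
    rw [← Finset.sum_filter]
    have : (Finset.univ.filter (fun l => (E k).1 = l ∨ (E k).2 = l))
        = {(E k).1, (E k).2} := by
      ext l; simp [eq_comm, or_comm]
    rw [this, Finset.sum_insert (by simp [hE k]), Finset.sum_singleton]
  calc ∑ k, (‖v (E k).1‖^2 + ‖v (E k).2‖^2)
      = ∑ l, ∑ k : Fin m, (if (E k).1 = l ∨ (E k).2 = l then ‖v l‖^2 else 0) := by
        rw [Finset.sum_comm]; exact Finset.sum_congr rfl (fun k _ => h1 k)
    _ = ∑ l, ((Finset.univ.filter (fun k => (E k).1 = l ∨ (E k).2 = l)).card : ℝ) * ‖v l‖^2 := by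
        refine Finset.sum_congr rfl (fun l _ => ?_)
        rw [← Finset.sum_filter, Finset.sum_const, nsmul_eq_mul]
    _ ≤ ∑ l, z * ‖v l‖^2 :=
        Finset.sum_le_sum (fun l _ => mul_le_mul_of_nonneg_right (hdeg l) (sq_nonneg _))
    _ = z * ‖v‖^2 := by conv_rhs => rw [PiLp.norm_sq_eq_of_L2, Finset.mul_sum]

lemma rig_smul (E : Fin m → Fin n × Fin n) (p : Config n d) (c : ℝ) (v : Config n d) :
    rig E p (c • v) = c • rig E p v := by
  ext k
  simp only [rig, PiLp.smul_apply, ← smul_sub, real_inner_smul_right]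
  rfl

lemma stressForm_smul (E : Fin m → Fin n × Fin n) (ω : EuclideanSpace ℝ (Fin m))
    (c : ℝ) (v : Config n d) :
    stressForm E ω (c • v) = c^2 * stressForm E ω v := by
  simp only [stressForm, PiLp.smul_apply, ← smul_sub, norm_smul, mul_pow, Real.norm_eq_abs,
    sq_abs, Finset.mul_sum]
  exact Finset.sum_congr rfl (fun k _ => by ring)

lemma scaled_bounds (E : Fin m → Fin n × Fin n) (p : Config n d)
    (C : Submodule ℝ (Config n d)) (κ lam μ₀ : ℝ) (ω : EuclideanSpace ℝ (Fin m))
    (hlower : ∀ v ∈ C, ‖v‖ = 1 → lam ≤ 2 * κ * ‖rig E p v‖ ^ 2 + stressForm E ω v)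
    (hμlower : ∀ v ∈ C, ‖v‖ = 1 → μ₀ ≤ stressForm E ω v)
    (v : Config n d) (hv : v ∈ C) (hv0 : v ≠ 0) :
    lam * ‖v‖^2 ≤ 2 * κ * ‖rig E p v‖ ^ 2 + stressForm E ω v ∧
      μ₀ * ‖v‖^2 ≤ stressForm E ω v := by
  have hn : (0:ℝ) < ‖v‖ := norm_pos_iff.mpr hv0
  set u := ‖v‖⁻¹ • v with hu
  have hucu : u ∈ C := C.smul_mem _ hv
  have hun : ‖u‖ = 1 := by
    rw [hu, norm_smul, norm_inv, norm_norm, inv_mul_cancel₀ hn.ne']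
  have h1 := hlower u hucu hun
  have h2 := hμlower u hucu hun
  rw [hu, rig_smul] at h1
  rw [hu] at h2
  rw [stressForm_smul, norm_smul] at h1
  rw [stressForm_smul] at h2
  constructor
  · have := mul_le_mul_of_nonneg_right h1 (sq_nonneg ‖v‖)
    calc lam * ‖v‖^2 ≤ (2 * κ * (‖(‖v‖⁻¹)‖ * ‖rig E p v‖) ^ 2 + ‖v‖⁻¹ ^ 2 * stressForm E ω v) * ‖v‖^2 := this
      _ = 2 * κ * ‖rig E p v‖ ^ 2 + stressForm E ω v := by
          rw [Real.norm_eq_abs, abs_of_nonneg (inv_nonneg.mpr hn.le)]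
          field_simp
  · have := mul_le_mul_of_nonneg_right h2 (sq_nonneg ‖v‖)
    calc μ₀ * ‖v‖^2 ≤ (‖v‖⁻¹ ^ 2 * stressForm E ω v) * ‖v‖^2 := this
      _ = stressForm E ω v := by field_simp

/-- The vector of squared edge displacements. -/
def sVec (E : Fin m → Fin n × Fin n) (v : Config n d) : EuclideanSpace ℝ (Fin m) :=
  WithLp.toLp 2 (fun k => ‖v (E k).1 - v (E k).2‖ ^ 2)

lemma sVec_norm_le (E : Fin m → Fin n × Fin n) (hE : ∀ k, (E k).1 ≠ (E k).2)
    {z : ℝ} (hz : 1 ≤ z) (hdeg : degBound E z) (v : Config n d) :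
    ‖sVec E v‖ ≤ 2 * Real.sqrt z * ‖v‖^2 := by
  have hsk : ∀ k : Fin m, sVec E v k ≤ 2 * ‖v‖^2 := by
    intro k
    have h1 : ‖v (E k).1 - v (E k).2‖^2 ≤ 2*‖v (E k).1‖^2 + 2*‖v (E k).2‖^2 := by
      have := norm_sub_le (v (E k).1) (v (E k).2)
      nlinarith [sq_nonneg (‖v (E k).1‖ - ‖v (E k).2‖), norm_nonneg (v (E k).1 - v (E k).2),
        norm_nonneg (v (E k).1), norm_nonneg (v (E k).2)]
    have h2 := pair_le v (hE k)
    simp only [sVec]; nlinarith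
  have hsum : ∑ k, sVec E v k ≤ 2 * z * ‖v‖^2 := by
    have h1 : ∀ k : Fin m, sVec E v k ≤ 2 * (‖v (E k).1‖^2 + ‖v (E k).2‖^2) := by
      intro k
      have := norm_sub_le (v (E k).1) (v (E k).2)
      simp only [sVec]
      nlinarith [sq_nonneg (‖v (E k).1‖ - ‖v (E k).2‖), norm_nonneg (v (E k).1 - v (E k).2),
        norm_nonneg (v (E k).1), norm_nonneg (v (E k).2)]
    calc ∑ k, sVec E v k ≤ ∑ k, 2 * (‖v (E k).1‖^2 + ‖v (E k).2‖^2) :=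
          Finset.sum_le_sum (fun k _ => h1 k)
      _ = 2 * ∑ k, (‖v (E k).1‖^2 + ‖v (E k).2‖^2) := by rw [Finset.mul_sum]
      _ ≤ 2 * (z * ‖v‖^2) := by
          have := sum_pairs_le E hE hdeg v
          linarith
      _ = 2 * z * ‖v‖^2 := by ring
  have hnn : ∀ k : Fin m, 0 ≤ sVec E v k := fun k => sq_nonneg _
  have hz0 : (0:ℝ) ≤ z := by linarith
  have hnsq : ‖sVec E v‖^2 ≤ 4 * z * ‖v‖^4 := by
    have : ‖sVec E v‖^2 = ∑ k, (sVec E v k)^2 := by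
      rw [PiLp.norm_sq_eq_of_L2]
      exact Finset.sum_congr rfl (fun k _ => by rw [Real.norm_eq_abs, sq_abs])
    rw [this]
    calc ∑ k, (sVec E v k)^2 ≤ ∑ k, (2*‖v‖^2) * sVec E v k :=
          Finset.sum_le_sum (fun k _ => by
            have := hsk k; have := hnn k; nlinarith)
      _ = (2*‖v‖^2) * ∑ k, sVec E v k := by rw [Finset.mul_sum]
      _ ≤ (2*‖v‖^2) * (2 * z * ‖v‖^2) := by
          apply mul_le_mul_of_nonneg_left hsum (by positivity)
      _ = 4 * z * ‖v‖^4 := by ring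
  have h2 : (0:ℝ) ≤ 2 * Real.sqrt z * ‖v‖^2 := by positivity
  have h3 : ‖sVec E v‖^2 ≤ (2 * Real.sqrt z * ‖v‖^2)^2 := by
    have hs : Real.sqrt z ^ 2 = z := Real.sq_sqrt hz0
    nlinarith [hnsq]
  exact (pow_le_pow_iff_left₀ (norm_nonneg _) h2 two_ne_zero).mp h3

end Aux
set_option maxHeartbeats 1000000 in
/-- **Theorem 3 (Edge-length barrier).** Under the framework setup with
`D < (1/9)(8/3 + √μ̄·√(μ̄+8/3) − μ̄)`: (i) `η₃ > (3/2)η₁`; (ii) any `q ∈ 𝒞^p` with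
`(3/2)η₁ < |q−p| ≤ η₃` has `|e(q)−e(p)| ≥ e_min(|q−p|)`; (iii) any continuous path in `𝒞^p`
from `p` to a configuration with the same edge lengths lying outside the `(3/2)η₁`-ball passes
through a point where the squared edge lengths have changed by at least `e_min(η₃)`. -/
theorem edge_length_barrier {n d m : ℕ} (E : Fin m → Fin n × Fin n) (hm : 0 < m)
    (hE : ∀ k, (E k).1 ≠ (E k).2)
    (p : Config n d) (C : Submodule ℝ (Config n d))
    (z κ lam μ₀ : ℝ) (ω : EuclideanSpace ℝ (Fin m))
    (hz : 1 ≤ z) (hdeg : degBound E z)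
    (hκ : 0 < κ) (hlam : 0 < lam) (hμ₀ : μ₀ ≤ lam / 2)
    (hlower : ∀ v ∈ C, ‖v‖ = 1 → lam ≤ 2 * κ * ‖rig E p v‖ ^ 2 + stressForm E ω v)
    (hμlower : ∀ v ∈ C, ‖v‖ = 1 → μ₀ ≤ stressForm E ω v)
    (L μbar η₁ D η₃ : ℝ) (emin : ℝ → ℝ)
    (hL : L = Real.sqrt (lam / (8 * z * κ)))
    (hμbar : μbar = 1 - μ₀ / lam)
    (hη₁ : η₁ = 4 * ‖stressGrad E ω p‖ / lam)
    (hD : D = (η₁ / L) * (Real.sqrt μbar + η₁ / L))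
    (hDlt : D < (1 / 9) * (8 / 3 + Real.sqrt μbar * Real.sqrt (μbar + 8 / 3) - μbar))
    (hη₃ : η₃ = (L / 2) * (Real.sqrt (μbar + 8 / 3) - Real.sqrt μbar))
    (hemin : ∀ η : ℝ, emin η =
      Real.sqrt ((‖ω‖ / κ) ^ 2 + (2 / 3) * (lam / κ) * η ^ 2 * (1 - (3 / 2) * η₁ / η))
        - ‖ω‖ / κ) :
    ((3 / 2) * η₁ < η₃) ∧
    (∀ q : Config n d, q - p ∈ C → (3 / 2) * η₁ < ‖q - p‖ → ‖q - p‖ ≤ η₃ →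
      emin ‖q - p‖ ≤ ‖esq E q - esq E p‖) ∧
    (∀ q : ℝ → Config n d, ContinuousOn q (Set.Icc 0 1) → q 0 = p →
      (∀ t ∈ Set.Icc (0:ℝ) 1, q t - p ∈ C) →
      (∀ k, ‖q 1 (E k).1 - q 1 (E k).2‖ = ‖p (E k).1 - p (E k).2‖) →
      (3 / 2) * η₁ < ‖q 1 - p‖ →
      ∃ t ∈ Set.Icc (0:ℝ) 1, emin η₃ ≤ ‖esq E (q t) - esq E p‖) := by
  have hη₁0 : 0 ≤ η₁ := by
    rw [hη₁]; exact div_nonneg (by positivity) hlam.le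
  have h8zκ : (0:ℝ) < 8 * z * κ := by
    have : (0:ℝ) < z * κ := mul_pos (by linarith) hκ
    linarith
  have hL0 : 0 < L := by
    rw [hL]; exact Real.sqrt_pos.mpr (by positivity)
  have hL2 : L ^ 2 = lam / (8 * z * κ) := by
    rw [hL]; exact Real.sq_sqrt (by positivity)
  have hlamz : lam = 8 * z * κ * L ^ 2 := by
    rw [hL2]; field_simp
  have hμhalf : (1:ℝ)/2 ≤ μbar := by
    have h : μ₀ / lam ≤ 1/2 := by rw [div_le_iff₀ hlam]; linarith
    rw [hμbar]; linarith
  set w := Real.sqrt μbar with hwdef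
  set sA := Real.sqrt (μbar + 8/3) with hsAdef
  have hw2 : w ^ 2 = μbar := Real.sq_sqrt (by linarith)
  have hw0 : 0 < w := Real.sqrt_pos.mpr (by linarith)
  have hsA2 : sA ^ 2 = μbar + 8/3 := Real.sq_sqrt (by linarith)
  have hsA0 : 0 ≤ sA := Real.sqrt_nonneg _
  have hsAw : w < sA := by
    have h : w^2 < sA^2 := by rw [hw2, hsA2]; linarith
    exact lt_of_pow_lt_pow_left₀ 2 hsA0 h
  set x := η₁ / L with hxdef
  have hx0 : 0 ≤ x := div_nonneg hη₁0 hL0.le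
  have hη₁L : η₁ = x * L := by rw [hxdef]; field_simp
  -- Part (i)
  have part1 : (3/2) * η₁ < η₃ := by
    by_contra hcon
    push_neg at hcon
    have hx3 : sA - w ≤ 3 * x := by
      by_contra h2
      push_neg at h2
      have h3 := mul_lt_mul_of_pos_left h2 (show (0:ℝ) < L/2 by linarith)
      rw [hη₃, hη₁L] at hcon
      linarith [h3, hcon]
    have hsw0 : (0:ℝ) ≤ sA - w := by linarith
    have p1 : 3*w*(sA - w) ≤ 3*w*(3*x) := by
      apply mul_le_mul_of_nonneg_left hx3 (by linarith)
    have p2 : (sA - w)^2 ≤ (3*x)^2 := by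
      apply pow_le_pow_left₀ hsw0 hx3
    have hkey : (1/9) * (8/3 + w * sA - μbar) ≤ x * (w + x) := by
      linarith [p1, p2, hsA2, hw2]
    rw [hD] at hDlt
    linarith
  -- positivity of emin
  have hemin_pos : ∀ η : ℝ, (3/2) * η₁ < η → 0 < emin η := by
    intro η hη
    have hη0 : 0 < η := lt_of_le_of_lt (by linarith) hη
    have hfac : 0 < 1 - (3/2) * η₁ / η := by
      rw [sub_pos, div_lt_one hη0]; exact hη
    have hX : 0 < (2/3) * (lam/κ) * η^2 * (1 - (3/2) * η₁ / η) :=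
      mul_pos (mul_pos (mul_pos (by norm_num) (div_pos hlam hκ)) (pow_pos hη0 2)) hfac
    rw [hemin η]
    have h1 : ‖ω‖/κ < Real.sqrt ((‖ω‖/κ)^2 + (2/3) * (lam/κ) * η^2 * (1 - (3/2) * η₁ / η)) := by
      have h2 := Real.sqrt_lt_sqrt (sq_nonneg (‖ω‖/κ)) (by linarith :
        (‖ω‖/κ)^2 < (‖ω‖/κ)^2 + (2/3) * (lam/κ) * η^2 * (1 - (3/2) * η₁ / η))
      rwa [Real.sqrt_sq (by positivity)] at h2
    linarith
  -- edge-geometry bounds used in part (ii)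
  have hwsA : w * sA ≤ w^2 + 4/3 := by
    refine (pow_le_pow_iff_left₀ (mul_nonneg hw0.le hsA0) (by positivity) two_ne_zero).mp ?_
    have e1 : (w * sA)^2 = μbar * (μbar + 8/3) := by rw [mul_pow, hw2, hsA2]
    rw [e1, hw2]
    linarith [sq_nonneg (μbar + 4/3)]
    
  have hsA5 : sA ≤ 5 * w := by
    refine (pow_le_pow_iff_left₀ hsA0 (by positivity) two_ne_zero).mp ?_
    rw [mul_pow, hsA2, hw2]
    linarith [hμhalf]
  have hwη₃ : w * η₃ ≤ (2/3) * L := by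
    rw [hη₃]
    linarith [mul_le_mul_of_nonneg_left hwsA (show (0:ℝ) ≤ L/2 by linarith)]
  have hη₃2Lw : η₃ ≤ 2 * L * w := by
    rw [hη₃]
    linarith [mul_le_mul_of_nonneg_left hsA5 (show (0:ℝ) ≤ L/2 by linarith)]
  -- Part (ii)
  have key : ∀ q : Config n d, q - p ∈ C → (3/2) * η₁ < ‖q - p‖ → ‖q - p‖ ≤ η₃ →
      emin ‖q - p‖ ≤ ‖esq E q - esq E p‖ := by
    intro q hqC hq1 hq2
    set v := q - p with hvdef
    have hq : p + v = q := by rw [hvdef]; abel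
    set η := ‖v‖ with hetadef
    have hη0 : 0 < η := lt_of_le_of_lt (by linarith) hq1
    have hηne : η ≠ 0 := hη0.ne'
    have hv0 : v ≠ 0 := fun h => hη0.ne' (by rw [hetadef, h, norm_zero])
    obtain ⟨hA, hB⟩ := scaled_bounds E p C κ lam μ₀ ω hlower hμlower v hqC hv0
    rw [← hetadef] at hA hB
    rw [← hq]
    set f := esq E (p + v) - esq E p with hfdef
    have hf : f = (2:ℝ) • rig E p v + sVec E v := by
      rw [hfdef]
      ext k
      rw [esq_diff]
      simp [sVec, PiLp.add_apply, PiLp.smul_apply, smul_eq_mul]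
    have hfsq : 4 * ‖rig E p v‖^2 - 4 * ‖rig E p v‖ * ‖sVec E v‖ ≤ ‖f‖^2 := by
      rw [hf, norm_add_sq_real, real_inner_smul_left, norm_smul]
      have h1 := abs_le.mp (abs_real_inner_le_norm (rig E p v) (sVec E v))
      have h2 : ‖(2:ℝ)‖ = 2 := by norm_num
      rw [h2]
      linarith [sq_nonneg ‖sVec E v‖, h1.1]
    have hsle : ‖sVec E v‖ ≤ 2 * Real.sqrt z * η^2 := by
      rw [hetadef]; exact sVec_norm_le E hE hz hdeg v
    have hF1 : 4 * κ * ‖rig E p v‖^2 - 8 * κ * Real.sqrt z * η^2 * ‖rig E p v‖ ≤ κ * ‖f‖^2 := by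
      have h3 : 4 * ‖rig E p v‖^2 - 8 * Real.sqrt z * η^2 * ‖rig E p v‖ ≤ ‖f‖^2 := by
        linarith [mul_nonneg (norm_nonneg (rig E p v)) (sub_nonneg.mpr hsle), hfsq]
      linarith [mul_le_mul_of_nonneg_left h3 hκ.le]
    have hlamη₁ : lam * η₁ = 4 * ‖stressGrad E ω p‖ := by
      rw [hη₁]; field_simp
    have hF2 : 2 * stressForm E ω v - lam * η₁ * η ≤ 2 * ⟪ω, f⟫_ℝ := by
      have h4 : ⟪ω, f⟫_ℝ = stressForm E ω v + 2 * ⟪stressGrad E ω p, v⟫_ℝ := by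
        rw [hfdef]; exact inner_omega_esq E ω p v
      have h5 : -(‖stressGrad E ω p‖ * η) ≤ ⟪stressGrad E ω p, v⟫_ℝ := by
        have h6 := abs_le.mp (abs_real_inner_le_norm (stressGrad E ω p) v)
        rw [hetadef]; linarith [h6.1]
      have h7 : lam * η₁ * η = 4 * ‖stressGrad E ω p‖ * η := by rw [hlamη₁]
      linarith [h5, h7]
    -- convexity/quadratic part
    set β := η / (2 * L * w) with hβdef
    have hβ0 : 0 < β := div_pos hη0 (by positivity)
    have hβ1 : β ≤ 1 := by
      rw [hβdef, div_le_one (by positivity)]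
      linarith [hη₃2Lw, hq2]
    have hwη : w * η ≤ (2/3) * L := by
      linarith [mul_le_mul_of_nonneg_left hq2 hw0.le, hwη₃]
    have hμ₀eq : μ₀ = lam * (1 - μbar) := by
      rw [hμbar]; field_simp; ring
    have hB' : lam * (1 - w^2) * η^2 ≤ stressForm E ω v := by
      rw [hw2, ← hμ₀eq]
      exact hB
    have hA' : lam * η^2 - 2 * κ * ‖rig E p v‖^2 ≤ stressForm E ω v := by linarith [hA]
    have hconv : 2*(1-β)*(lam*η^2 - 2*κ*‖rig E p v‖^2) + 2*β*(lam*(1-w^2)*η^2)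
        ≤ 2 * stressForm E ω v := by
      have hc1 := mul_le_mul_of_nonneg_left hA' (show (0:ℝ) ≤ 2*(1-β) by linarith)
      have hc2 := mul_le_mul_of_nonneg_left hB' (show (0:ℝ) ≤ 2*β by linarith)
      have hc3 : 2*(1-β)*stressForm E ω v + 2*β*stressForm E ω v = 2*stressForm E ω v := by ring
      linarith [hc1, hc2, hc3]
    have hW2 : Real.sqrt z ^ 2 = z := Real.sq_sqrt (by linarith)
    have hLne : L ≠ 0 := hL0.ne'
    have hwne : w ≠ 0 := hw0.ne'
    have h6 : 0 ≤ 4*β*κ*‖rig E p v‖^2 - 8*κ*Real.sqrt z*η^2*‖rig E p v‖ + lam*w*η^3/L := by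
      have e3 : ‖rig E p v‖^2 - 4*Real.sqrt z*L*w*η*‖rig E p v‖ + 4*z*L^2*w^2*η^2
          = (‖rig E p v‖ - 2*Real.sqrt z*L*w*η)^2 := by
        linear_combination (-(4*L^2*w^2*η^2)) * hW2
      have e5 : 0 ≤ ‖rig E p v‖^2 - 4*Real.sqrt z*L*w*η*‖rig E p v‖ + 4*z*L^2*w^2*η^2 := by
        rw [e3]; exact sq_nonneg _
      have e7 : (2*κ*η/(L*w)) * (‖rig E p v‖^2 - 4*Real.sqrt z*L*w*η*‖rig E p v‖
            + 4*z*L^2*w^2*η^2)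
          = 4*β*κ*‖rig E p v‖^2 - 8*κ*Real.sqrt z*η^2*‖rig E p v‖ + lam*w*η^3/L := by
        rw [hβdef, hlamz]
        field_simp
        ring
      have e8 : 0 ≤ (2*κ*η/(L*w)) * (‖rig E p v‖^2 - 4*Real.sqrt z*L*w*η*‖rig E p v‖
            + 4*z*L^2*w^2*η^2) := by
        apply mul_nonneg _ e5
        positivity
      rw [e7] at e8
      exact e8
    have h7 : lam*w*η^3/L ≤ (2/3)*lam*η^2 := by
      rw [div_le_iff₀ hL0]
      linarith [mul_le_mul_of_nonneg_left hwη (mul_nonneg hlam.le (sq_nonneg η))]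
    have e6 : 2*β*(lam*(1-w^2)*η^2) = 2*β*lam*η^2 - lam*w*η^3/L := by
      rw [hβdef]
      field_simp
    have hF3 : (2/3)*lam*η^2 ≤ 4*κ*‖rig E p v‖^2 - 8*κ*Real.sqrt z*η^2*‖rig E p v‖
        + 2*stressForm E ω v := by
      linarith [hconv, h6, h7, e6]
    have hG : (2/3)*lam*η^2 - lam*η₁*η ≤ κ*‖f‖^2 + 2*⟪ω, f⟫_ℝ := by
      linarith [hF1, hF2, hF3]
    -- conclude with square roots
    have hωf : ⟪ω, f⟫_ℝ ≤ ‖ω‖ * ‖f‖ := real_inner_le_norm ω f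
    have hG2 : (2/3)*lam*η^2 - lam*η₁*η ≤ κ*‖f‖^2 + 2*(‖ω‖*‖f‖) := by linarith [hG, hωf]
    rw [hemin]
    have hXeq : (2/3)*(lam/κ)*η^2*(1 - (3/2)*η₁/η) = ((2/3)*lam*η^2 - lam*η₁*η)/κ := by
      field_simp
    rw [hXeq]
    have hle2 : (‖ω‖/κ)^2 + ((2/3)*lam*η^2 - lam*η₁*η)/κ ≤ (‖f‖ + ‖ω‖/κ)^2 := by
      have h8 : ((2/3)*lam*η^2 - lam*η₁*η)/κ ≤ ‖f‖^2 + 2*‖f‖*(‖ω‖/κ) := by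
        rw [div_le_iff₀ hκ]
        have h9 : (‖f‖^2 + 2*‖f‖*(‖ω‖/κ))*κ = ‖f‖^2*κ + 2*‖f‖*‖ω‖ := by
          field_simp
        rw [h9]
        linarith [hG2]
      linarith [h8, sq_nonneg (‖f‖ + ‖ω‖/κ)]
    have h10 := Real.sqrt_le_sqrt hle2
    rw [Real.sqrt_sq (add_nonneg (norm_nonneg f) (div_nonneg (norm_nonneg ω) hκ.le))] at h10
    linarith [h10]
  refine ⟨part1, key, ?_⟩
  -- Part (iii)
  intro q hcont hq0 hqC hlen hfar
  have hesq0 : ‖esq E (q 1) - esq E p‖ = 0 := by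
    have h : esq E (q 1) = esq E p := by
      ext k
      simp only [esq]
      rw [hlen k]
    rw [h, sub_self, norm_zero]
  have h1gt : η₃ < ‖q 1 - p‖ := by
    by_contra hcon
    push_neg at hcon
    have h := key (q 1) (hqC 1 (Set.mem_Icc.mpr ⟨zero_le_one, le_refl 1⟩)) hfar hcon
    rw [hesq0] at h
    exact absurd h (not_le.mpr (hemin_pos _ hfar))
  have hgc : ContinuousOn (fun s => ‖q s - p‖) (Set.Icc (0:ℝ) 1) :=
    (hcont.sub continuousOn_const).norm
  have hmem : η₃ ∈ Set.Icc ((fun s => ‖q s - p‖) 0) ((fun s => ‖q s - p‖) 1) := by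
    constructor
    · show ‖q 0 - p‖ ≤ η₃
      rw [hq0, sub_self, norm_zero]
      linarith [part1, hη₁0]
    · exact le_of_lt h1gt
  obtain ⟨s, hs, hfs⟩ := intermediate_value_Icc zero_le_one hgc hmem
  have hfs' : ‖q s - p‖ = η₃ := hfs
  have h := key (q s) (hqC s hs) (by rw [hfs']; exact part1) (le_of_eq hfs')
  rw [hfs'] at h
  exact ⟨s, hs, h⟩
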